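/- Let N ≥ 2 and define on the half-space ℝ^N_+ = {(x,y) : x ∈ ℝ^{N−1}, y > 0} the function U_N(x,y) = ω_{N−1}^{−1/(N−1)} log √((|x|² + (1+y)²)/(|x|² + (1−y)²)). Then U_N is N-harmonic on ℝ^N_+ \ {(0,1)}, i.e., div(|∇U_N|^{N−2} ∇U_N) = 0 there. -/

import Mathlib

open Real

noncomputable def sphereArea (N : ℕ) : ℝ :=
  2 * Real.pi ^ ((N : ℝ) / 2) / Real.Gamma ((N : ℝ) / 2)

noncomputable def AA {n : ℕ} (z : EuclideanSpace ℝ (Fin (n + 1))) : ℝ :=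
  (∑ i : Fin n, z (Fin.castSucc i) ^ 2) + (1 - z (Fin.last n)) ^ 2

noncomputable def BB {n : ℕ} (z : EuclideanSpace ℝ (Fin (n + 1))) : ℝ :=
  (∑ i : Fin n, z (Fin.castSucc i) ^ 2) + (1 + z (Fin.last n)) ^ 2

noncomputable def UN {n : ℕ} (z : EuclideanSpace ℝ (Fin (n + 1))) : ℝ :=
  sphereArea (n + 1) ^ (-(1 : ℝ) / n) * Real.log (Real.sqrt (BB z / AA z))

section
variable {n : ℕ}

noncomputable def SS (w : EuclideanSpace ℝ (Fin (n + 1))) : ℝ :=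
  ∑ i : Fin n, w (Fin.castSucc i) ^ 2

noncomputable def uuu (n : ℕ) : EuclideanSpace ℝ (Fin (n + 1)) :=
  EuclideanSpace.single (Fin.last n) 1

noncomputable def WW (w : EuclideanSpace ℝ (Fin (n + 1))) : EuclideanSpace ℝ (Fin (n + 1)) :=
  (-4 * w (Fin.last n)) • w + (2 * (SS w + 1 + w (Fin.last n) ^ 2)) • uuu n

noncomputable def PP (w : EuclideanSpace ℝ (Fin (n + 1))) : ℝ := AA w * BB w

noncomputable def ccc (n : ℕ) : ℝ := sphereArea (n + 1) ^ (-(1 : ℝ) / n)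

noncomputable def GG (w : EuclideanSpace ℝ (Fin (n + 1))) : EuclideanSpace ℝ (Fin (n + 1)) :=
  (ccc n / PP w) • WW w

lemma AA_eq (w : EuclideanSpace ℝ (Fin (n + 1))) :
    AA w = SS w + (1 - w (Fin.last n)) ^ 2 := rfl

lemma BB_eq (w : EuclideanSpace ℝ (Fin (n + 1))) :
    BB w = SS w + (1 + w (Fin.last n)) ^ 2 := rfl


lemma sphereArea_pos (N : ℕ) (h : 0 < N) : 0 < sphereArea N := by
  have h1 : (0:ℝ) < (N:ℝ) / 2 := by positivity
  have := Real.Gamma_pos_of_pos h1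
  have h2 : (0:ℝ) < Real.pi ^ ((N : ℝ) / 2) := Real.rpow_pos_of_pos Real.pi_pos _
  unfold sphereArea; positivity

lemma ccc_pos (n : ℕ) : 0 < ccc n := Real.rpow_pos_of_pos (sphereArea_pos _ (Nat.succ_pos n)) _

lemma SS_nonneg (w : EuclideanSpace ℝ (Fin (n + 1))) : 0 ≤ SS w :=
  Finset.sum_nonneg fun _ _ => sq_nonneg _

lemma BB_pos {w : EuclideanSpace ℝ (Fin (n + 1))} (hy : 0 < w (Fin.last n)) :
    0 < BB w := by
  have := SS_nonneg w
  rw [BB_eq]; nlinarith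

lemma AA_pos {w : EuclideanSpace ℝ (Fin (n + 1))}
    (hz : w ≠ EuclideanSpace.single (Fin.last n) 1) : 0 < AA w := by
  rcases lt_or_eq_of_le (by have := SS_nonneg w; rw [AA_eq]; positivity : (0:ℝ) ≤ AA w) with h | h
  · exact h
  exfalso
  apply hz
  have hSn := SS_nonneg w
  have h2 : (0:ℝ) ≤ (1 - w (Fin.last n)) ^ 2 := sq_nonneg _
  rw [AA_eq] at h
  have hS : SS w = 0 := by nlinarith
  have hlast : w (Fin.last n) = 1 := by nlinarith
  have hcs : ∀ i : Fin n, w (Fin.castSucc i) = 0 := by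
    intro i
    rw [SS] at hS
    have := (Finset.sum_eq_zero_iff_of_nonneg
      (fun j (_ : j ∈ Finset.univ) => sq_nonneg (w (Fin.castSucc j)))).mp hS i (Finset.mem_univ _)
    exact pow_eq_zero_iff two_ne_zero |>.mp this
  ext i
  induction i using Fin.lastCases with
  | last => simpa [EuclideanSpace.single_apply] using hlast
  | cast j => simpa [EuclideanSpace.single_apply, (Fin.castSucc_lt_last j).ne] using hcs j

lemma WW_apply_castSucc (w : EuclideanSpace ℝ (Fin (n + 1))) (j : Fin n) :
    WW w (Fin.castSucc j) = -4 * w (Fin.last n) * w (Fin.castSucc j) := by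
  simp [WW, uuu, EuclideanSpace.single_apply, (Fin.castSucc_lt_last j).ne]

lemma WW_apply_last (w : EuclideanSpace ℝ (Fin (n + 1))) :
    WW w (Fin.last n) = 2 * (SS w + 1 - w (Fin.last n) ^ 2) := by
  simp [WW, uuu, EuclideanSpace.single_apply]
  ring

lemma GG_apply (w : EuclideanSpace ℝ (Fin (n + 1))) (i : Fin (n + 1)) :
    GG w i = (ccc n / PP w) * WW w i := rfl

noncomputable def dSS (w : EuclideanSpace ℝ (Fin (n + 1))) :
    EuclideanSpace ℝ (Fin (n + 1)) →L[ℝ] ℝ :=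
  ∑ i : Fin n, (2 * w (Fin.castSucc i)) • EuclideanSpace.proj (Fin.castSucc i)

lemma hasFDerivAt_SS (w : EuclideanSpace ℝ (Fin (n + 1))) :
    HasFDerivAt SS (dSS w) w := by
  apply HasFDerivAt.fun_sum
  intro i _
  have h := ((EuclideanSpace.proj (𝕜 := ℝ) (Fin.castSucc i)).hasFDerivAt (x := w)).fun_mul
    ((EuclideanSpace.proj (𝕜 := ℝ) (Fin.castSucc i)).hasFDerivAt (x := w))
  simp only [sq]
  refine h.congr_fderiv ?_
  ext v
  simp [PiLp.proj_apply]
  ring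

lemma dSS_apply (w v : EuclideanSpace ℝ (Fin (n + 1))) :
    dSS w v = ∑ i : Fin n, 2 * w (Fin.castSucc i) * v (Fin.castSucc i) := by
  simp [dSS, mul_assoc]

noncomputable def dAA (w : EuclideanSpace ℝ (Fin (n + 1))) :
    EuclideanSpace ℝ (Fin (n + 1)) →L[ℝ] ℝ :=
  dSS w - (2 * (1 - w (Fin.last n))) • EuclideanSpace.proj (Fin.last n)

noncomputable def dBB (w : EuclideanSpace ℝ (Fin (n + 1))) :
    EuclideanSpace ℝ (Fin (n + 1)) →L[ℝ] ℝ :=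
  dSS w + (2 * (1 + w (Fin.last n))) • EuclideanSpace.proj (Fin.last n)

lemma hasFDerivAt_last (w : EuclideanSpace ℝ (Fin (n + 1))) :
    HasFDerivAt (fun v : EuclideanSpace ℝ (Fin (n + 1)) => v (Fin.last n))
      (EuclideanSpace.proj (𝕜 := ℝ) (Fin.last n)) w :=
  (EuclideanSpace.proj (𝕜 := ℝ) (Fin.last n)).hasFDerivAt

lemma hasFDerivAt_AA (w : EuclideanSpace ℝ (Fin (n + 1))) :
    HasFDerivAt AA (dAA w) w := by
  have h1 : HasFDerivAt (fun v : EuclideanSpace ℝ (Fin (n + 1)) => (1 - v (Fin.last n)) ^ 2)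
      ((-(2 * (1 - w (Fin.last n)))) • EuclideanSpace.proj (𝕜 := ℝ) (Fin.last n)) w := by
    have h0 : HasFDerivAt (fun v : EuclideanSpace ℝ (Fin (n + 1)) => 1 - v (Fin.last n))
        (-EuclideanSpace.proj (𝕜 := ℝ) (Fin.last n)) w := by
      exact (hasFDerivAt_last w).const_sub 1
    have := h0.fun_mul h0
    simp only [sq]
    refine this.congr_fderiv ?_
    ext v
    simp [PiLp.proj_apply]
    ring
  have := (hasFDerivAt_SS w).fun_add h1
  refine this.congr_fderiv ?_
  ext v
  simp [dAA, ContinuousLinearMap.sub_apply, ContinuousLinearMap.add_apply,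
    ContinuousLinearMap.smul_apply]
  ring

lemma hasFDerivAt_BB (w : EuclideanSpace ℝ (Fin (n + 1))) :
    HasFDerivAt BB (dBB w) w := by
  have h1 : HasFDerivAt (fun v : EuclideanSpace ℝ (Fin (n + 1)) => (1 + v (Fin.last n)) ^ 2)
      ((2 * (1 + w (Fin.last n))) • EuclideanSpace.proj (𝕜 := ℝ) (Fin.last n)) w := by
    have h0 : HasFDerivAt (fun v : EuclideanSpace ℝ (Fin (n + 1)) => 1 + v (Fin.last n))
        (EuclideanSpace.proj (𝕜 := ℝ) (Fin.last n)) w := by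
      exact (hasFDerivAt_last w).const_add 1
    have := h0.fun_mul h0
    simp only [sq]
    refine this.congr_fderiv ?_
    ext v
    simp [PiLp.proj_apply]
    ring
  exact (hasFDerivAt_SS w).fun_add h1


lemma hasGradientAt_UN {w : EuclideanSpace ℝ (Fin (n + 1))} (hA : 0 < AA w) (hB : 0 < BB w) :
    HasGradientAt UN (GG w) w := by
  set D : EuclideanSpace ℝ (Fin (n + 1)) →L[ℝ] ℝ :=
    (ccc n / 2) • (((BB w)⁻¹ • dBB w) - ((AA w)⁻¹ • dAA w)) with hD
  have h1 : ∀ᶠ v in nhds w, 0 < AA v := by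
    have := (hasFDerivAt_AA w).continuousAt (Ioi_mem_nhds hA)
    exact Filter.eventually_of_mem this fun v hv => hv
  have h2 : ∀ᶠ v in nhds w, 0 < BB v := by
    have := (hasFDerivAt_BB w).continuousAt (Ioi_mem_nhds hB)
    exact Filter.eventually_of_mem this fun v hv => hv
  have heq : UN =ᶠ[nhds w] fun v => (ccc n / 2) * (Real.log (BB v) - Real.log (AA v)) := by
    filter_upwards [h1, h2] with v hAv hBv
    show sphereArea (n+1) ^ (-(1:ℝ)/n) * Real.log (Real.sqrt (BB v / AA v)) = _
    rw [Real.log_sqrt (by positivity), Real.log_div hBv.ne' hAv.ne']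
    show ccc n * _ = _
    ring
  have hg : HasFDerivAt (fun v => (ccc n / 2) * (Real.log (BB v) - Real.log (AA v))) D w :=
    ((((hasFDerivAt_BB w).log hB.ne').sub ((hasFDerivAt_AA w).log hA.ne')).const_mul _)
  have hU : HasFDerivAt UN D w := hg.congr_of_eventuallyEq heq
  have hgrad := hU.hasGradientAt
  suffices hsym : D = (InnerProductSpace.toDual ℝ (EuclideanSpace ℝ (Fin (n + 1)))) (GG w) by
    rw [hsym, LinearIsometryEquiv.symm_apply_apply] at hgrad
    exact hgrad
  ext v
  rw [InnerProductSpace.toDual_apply_apply, PiLp.inner_apply]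
  simp only [RCLike.inner_apply, starRingEnd_apply, star_trivial]
  have hLHS : D v = (ccc n / 2) * ((BB w)⁻¹ * (dSS w v + 2 * (1 + w (Fin.last n)) * v (Fin.last n))
      - (AA w)⁻¹ * (dSS w v - 2 * (1 - w (Fin.last n)) * v (Fin.last n))) := by
    rw [hD]
    simp only [ContinuousLinearMap.smul_apply, ContinuousLinearMap.sub_apply,
      ContinuousLinearMap.add_apply, dAA, dBB, PiLp.proj_apply, smul_eq_mul]
  rw [hLHS, dSS_apply]
  rw [Fin.sum_univ_castSucc]
  simp only [GG_apply, WW_apply_castSucc, WW_apply_last]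
  set y := w (Fin.last n)
  have hT1 : (∑ i : Fin n, 2 * w (Fin.castSucc i) * v (Fin.castSucc i))
      = 2 * ∑ i : Fin n, w (Fin.castSucc i) * v (Fin.castSucc i) := by
    rw [Finset.mul_sum]; exact Finset.sum_congr rfl fun i _ => by ring
  have hT2 : (∑ i : Fin n, v (Fin.castSucc i) * (ccc n / PP w * (-4 * y * w (Fin.castSucc i))))
      = (ccc n / PP w * (-4 * y)) * ∑ i : Fin n, w (Fin.castSucc i) * v (Fin.castSucc i) := by
    rw [Finset.mul_sum]; exact Finset.sum_congr rfl fun i _ => by ring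
  rw [hT1, hT2]
  set T := ∑ i : Fin n, w (Fin.castSucc i) * v (Fin.castSucc i)
  have hPP : PP w = AA w * BB w := rfl
  have hAe : AA w = SS w + (1 - y) ^ 2 := AA_eq w
  have hBe : BB w = SS w + (1 + y) ^ 2 := BB_eq w
  have hA' : (0:ℝ) < SS w + (1 - y) ^ 2 := hAe ▸ hA
  have hB' : (0:ℝ) < SS w + (1 + y) ^ 2 := hBe ▸ hB
  rw [hPP, hAe, hBe]
  field_simp
  ring
lemma sum_WW_sq (w : EuclideanSpace ℝ (Fin (n + 1))) :
    ∑ i, (WW w i) ^ 2 = 4 * PP w := by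
  rw [Fin.sum_univ_castSucc]
  simp only [WW_apply_castSucc, WW_apply_last]
  have h : ∀ j ∈ Finset.univ, (-4 * w (Fin.last n) * w (Fin.castSucc j)) ^ 2
      = (16 * w (Fin.last n) ^ 2) * w (Fin.castSucc j) ^ 2 := fun j _ => by ring
  rw [Finset.sum_congr rfl h, ← Finset.mul_sum]
  show 16 * w (Fin.last n) ^ 2 * SS w + _ = _
  have hPP : PP w = (SS w + (1 - w (Fin.last n)) ^ 2) * (SS w + (1 + w (Fin.last n)) ^ 2) := rfl
  rw [hPP]
  ring

lemma norm_WW (w : EuclideanSpace ℝ (Fin (n + 1))) : ‖WW w‖ = 2 * Real.sqrt (PP w) := by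
  rw [EuclideanSpace.norm_eq]
  simp only [Real.norm_eq_abs, sq_abs]
  rw [sum_WW_sq, show (4:ℝ) * PP w = 2 ^ 2 * PP w by ring,
    Real.sqrt_mul (by positivity), Real.sqrt_sq (by norm_num : (0:ℝ) ≤ 2)]

lemma PP_nonneg (w : EuclideanSpace ℝ (Fin (n + 1))) : 0 ≤ PP w := by
  have h := sum_WW_sq w
  have : (0:ℝ) ≤ ∑ i, (WW w i) ^ 2 := Finset.sum_nonneg fun i _ => sq_nonneg _
  linarith

lemma norm_GG {w : EuclideanSpace ℝ (Fin (n + 1))} (hP : 0 < PP w) :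
    ‖GG w‖ = 2 * ccc n / Real.sqrt (PP w) := by
  have hsp : 0 < Real.sqrt (PP w) := Real.sqrt_pos.mpr hP
  have hc := ccc_pos n
  rw [GG, norm_smul, Real.norm_eq_abs, abs_of_pos (by positivity), norm_WW]
  field_simp
  nlinarith [Real.mul_self_sqrt hP.le, Real.sqrt_nonneg (PP w)]

lemma scalar_pow (hn : 1 ≤ n) {p : ℝ} (hP : 0 < p) :
    (2 * ccc n / Real.sqrt p) ^ (n - 1) * (ccc n / p)
      = 2 ^ (n - 1) * ccc n ^ n * p ^ (-(((n:ℝ) + 1) / 2)) := by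
  have hsp : 0 < Real.sqrt p := Real.sqrt_pos.mpr hP
  have hc := ccc_pos n
  have h1 : ((n - 1 : ℕ) : ℝ) = (n : ℝ) - 1 := by
    rw [Nat.cast_sub hn]; norm_num
  have h2 : Real.sqrt p ^ (n - 1) = p ^ (((n:ℝ) - 1) / 2) := by
    rw [Real.sqrt_eq_rpow, ← Real.rpow_natCast (p ^ ((1:ℝ)/2)) (n-1),
      ← Real.rpow_mul hP.le, h1]
    ring_nf
  have h3 : p ^ (((n:ℝ) - 1) / 2) * p = p ^ (((n:ℝ) + 1) / 2) := by
    nth_rewrite 2 [← Real.rpow_one p]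
    rw [← Real.rpow_add hP]
    ring_nf
  have h4 : ccc n ^ (n - 1) * ccc n = ccc n ^ n := by
    rw [← pow_succ, Nat.sub_add_cancel hn]
  have hrp : 0 < p ^ (((n:ℝ) + 1) / 2) := Real.rpow_pos_of_pos hP _
  rw [Real.rpow_neg hP.le, div_pow, mul_pow, h2]
  rw [div_mul_div_comm, h3]
  rw [show 2 ^ (n-1) * ccc n ^ (n-1) * ccc n = 2 ^ (n-1) * ccc n ^ n by rw [mul_assoc, h4]]
  field_simp
noncomputable def dWW (z : EuclideanSpace ℝ (Fin (n + 1))) :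
    EuclideanSpace ℝ (Fin (n + 1)) →L[ℝ] EuclideanSpace ℝ (Fin (n + 1)) :=
  ((-4 * z (Fin.last n)) • ContinuousLinearMap.id ℝ (EuclideanSpace ℝ (Fin (n + 1)))
    + (((-4:ℝ) • EuclideanSpace.proj (Fin.last n)).smulRight z))
  + ((2 * (SS z + 1 + z (Fin.last n) ^ 2)) • (0 : EuclideanSpace ℝ (Fin (n + 1)) →L[ℝ] EuclideanSpace ℝ (Fin (n + 1)))
    + ((2:ℝ) • (dSS z + (2 * z (Fin.last n)) • EuclideanSpace.proj (Fin.last n))).smulRight (uuu n))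

lemma hasFDerivAt_sq_last (z : EuclideanSpace ℝ (Fin (n + 1))) :
    HasFDerivAt (fun w : EuclideanSpace ℝ (Fin (n + 1)) => (w (Fin.last n) : ℝ) ^ 2)
      ((2 * z (Fin.last n) : ℝ) • EuclideanSpace.proj (𝕜 := ℝ) (Fin.last n)) z := by
  have h := (hasFDerivAt_last z).fun_mul (hasFDerivAt_last z)
  simp only [sq]
  refine h.congr_fderiv ?_
  ext v
  simp [PiLp.proj_apply]
  ring

lemma hasFDerivAt_WW (z : EuclideanSpace ℝ (Fin (n + 1))) :
    HasFDerivAt WW (dWW z) z := by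
  have hW1 : HasFDerivAt (fun w : EuclideanSpace ℝ (Fin (n + 1)) => (-4 * w (Fin.last n)) • w)
      ((-4 * z (Fin.last n)) • ContinuousLinearMap.id ℝ (EuclideanSpace ℝ (Fin (n + 1)))
        + (((-4:ℝ) • EuclideanSpace.proj (Fin.last n)).smulRight z)) z := by
    have := (((hasFDerivAt_last z).const_mul (-4:ℝ)).fun_smul (hasFDerivAt_id z))
    exact this
  have hsc : HasFDerivAt (fun w : EuclideanSpace ℝ (Fin (n + 1)) => 2 * (SS w + 1 + w (Fin.last n) ^ 2))
      ((2:ℝ) • (dSS z + (2 * z (Fin.last n)) • EuclideanSpace.proj (Fin.last n))) z := by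
    have := (((hasFDerivAt_SS z).fun_add (hasFDerivAt_const (1:ℝ) z)).fun_add (hasFDerivAt_sq_last z)).const_mul (2:ℝ)
    refine this.congr_fderiv ?_
    rw [add_zero]
  have hW2 := hsc.smul (hasFDerivAt_const (uuu n) z)
  exact hW1.add hW2

noncomputable def dPP (z : EuclideanSpace ℝ (Fin (n + 1))) :
    EuclideanSpace ℝ (Fin (n + 1)) →L[ℝ] ℝ :=
  AA z • dBB z + BB z • dAA z

lemma hasFDerivAt_PP (z : EuclideanSpace ℝ (Fin (n + 1))) :
    HasFDerivAt PP (dPP z) z := (hasFDerivAt_AA z).mul (hasFDerivAt_BB z)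

lemma dSS_single_castSucc (w : EuclideanSpace ℝ (Fin (n + 1))) (j : Fin n) :
    dSS w (EuclideanSpace.single (Fin.castSucc j) 1) = 2 * w (Fin.castSucc j) := by
  rw [dSS_apply]
  rw [Finset.sum_eq_single j]
  · simp [EuclideanSpace.single_apply]
  · intro b _ hb
    simp [EuclideanSpace.single_apply, (Fin.castSucc_injective n).ne hb]
  · simp

lemma dSS_single_last (w : EuclideanSpace ℝ (Fin (n + 1))) :
    dSS w (EuclideanSpace.single (Fin.last n) 1) = 0 := by
  rw [dSS_apply]
  apply Finset.sum_eq_zero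
  intro i _
  simp [EuclideanSpace.single_apply, (Fin.castSucc_lt_last i).ne]

lemma dPP_single_castSucc (z : EuclideanSpace ℝ (Fin (n + 1))) (j : Fin n) :
    dPP z (EuclideanSpace.single (Fin.castSucc j) 1)
      = 2 * z (Fin.castSucc j) * (AA z + BB z) := by
  simp only [dPP, ContinuousLinearMap.add_apply, ContinuousLinearMap.smul_apply, dAA, dBB,
    ContinuousLinearMap.sub_apply, PiLp.proj_apply, smul_eq_mul, dSS_single_castSucc,
    EuclideanSpace.single_apply, (Fin.castSucc_lt_last j).ne']
  simp [EuclideanSpace.single_apply, (Fin.castSucc_lt_last j).ne']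
  ring

lemma dPP_single_last (z : EuclideanSpace ℝ (Fin (n + 1))) :
    dPP z (EuclideanSpace.single (Fin.last n) 1)
      = 2 * (1 + z (Fin.last n)) * AA z - 2 * (1 - z (Fin.last n)) * BB z := by
  simp only [dPP, ContinuousLinearMap.add_apply, ContinuousLinearMap.smul_apply, dAA, dBB,
    ContinuousLinearMap.sub_apply, PiLp.proj_apply, smul_eq_mul, dSS_single_last]
  simp [EuclideanSpace.single_apply]
  ring

lemma dWW_single_castSucc (z : EuclideanSpace ℝ (Fin (n + 1))) (j : Fin n) :
    dWW z (EuclideanSpace.single (Fin.castSucc j) 1) (Fin.castSucc j) = -4 * z (Fin.last n) := by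
  simp [dWW, ContinuousLinearMap.add_apply, ContinuousLinearMap.smul_apply,
    ContinuousLinearMap.smulRight_apply, ContinuousLinearMap.id_apply,
    ContinuousLinearMap.zero_apply, PiLp.add_apply, PiLp.smul_apply, PiLp.proj_apply,
    smul_eq_mul, uuu, EuclideanSpace.single_apply, dSS_single_castSucc,
    (Fin.castSucc_lt_last j).ne, (Fin.castSucc_lt_last j).ne']

lemma dWW_single_last (z : EuclideanSpace ℝ (Fin (n + 1))) :
    dWW z (EuclideanSpace.single (Fin.last n) 1) (Fin.last n) = -4 * z (Fin.last n) := by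
  simp [dWW, ContinuousLinearMap.add_apply, ContinuousLinearMap.smul_apply,
    ContinuousLinearMap.smulRight_apply, ContinuousLinearMap.id_apply,
    ContinuousLinearMap.zero_apply, PiLp.add_apply, PiLp.smul_apply, PiLp.proj_apply,
    smul_eq_mul, uuu, EuclideanSpace.single_apply, dSS_single_last]
  ring

lemma div_dWW (z : EuclideanSpace ℝ (Fin (n + 1))) :
    ∑ i, dWW z (EuclideanSpace.single i 1) i = -4 * z (Fin.last n) * ((n : ℝ) + 1) := by
  rw [Fin.sum_univ_castSucc]
  have h : ∀ j ∈ Finset.univ, dWW z (EuclideanSpace.single (Fin.castSucc j) 1) (Fin.castSucc j)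
      = -4 * z (Fin.last n) := fun j _ => dWW_single_castSucc z j
  rw [Finset.sum_congr rfl h, dWW_single_last, Finset.sum_const, Finset.card_univ,
    Fintype.card_fin, nsmul_eq_mul]
  ring

lemma sum_dPP_WW (z : EuclideanSpace ℝ (Fin (n + 1))) :
    ∑ i, dPP z (EuclideanSpace.single i 1) * WW z i
      = -16 * z (Fin.last n) * SS z * (SS z + 1 + z (Fin.last n) ^ 2)
        + 8 * z (Fin.last n) * ((SS z - 1 + z (Fin.last n) ^ 2) * (SS z + 1 - z (Fin.last n) ^ 2)) := by
  rw [Fin.sum_univ_castSucc]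
  have h : ∀ j ∈ Finset.univ,
      dPP z (EuclideanSpace.single (Fin.castSucc j) 1) * WW z (Fin.castSucc j)
      = (-16 * z (Fin.last n) * (SS z + 1 + z (Fin.last n) ^ 2)) * z (Fin.castSucc j) ^ 2 := by
    intro j _
    rw [dPP_single_castSucc, WW_apply_castSucc, AA_eq, BB_eq]
    ring
  rw [Finset.sum_congr rfl h, ← Finset.mul_sum]
  show _ * SS z + _ = _
  rw [dPP_single_last, WW_apply_last, AA_eq, BB_eq]
  ring
end

noncomputable def FN {n : ℕ} (w : EuclideanSpace ℝ (Fin (n + 1))) :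
    EuclideanSpace ℝ (Fin (n + 1)) :=
  ‖gradient UN w‖ ^ (n - 1) • gradient UN w

/-- `U_N` is `N`-harmonic on `ℝ^N_+ \ {(0,1)}`: `div(|∇U_N|^{N−2}∇U_N) = 0` there. -/
theorem stmt8 {n : ℕ} (hn : 1 ≤ n) (z : EuclideanSpace ℝ (Fin (n + 1)))
    (hy : 0 < z (Fin.last n)) (hz : z ≠ EuclideanSpace.single (Fin.last n) 1) :
    DifferentiableAt ℝ (FN (n := n)) z ∧
    ∑ i, fderiv ℝ (FN (n := n)) z (EuclideanSpace.single i 1) i = 0 := by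
  have hA := AA_pos hz
  have hB := BB_pos hy
  have hP : 0 < PP z := mul_pos hA hB
  have h1 : ∀ᶠ v in nhds z, 0 < AA v := by
    have := (hasFDerivAt_AA z).continuousAt (Ioi_mem_nhds hA)
    exact Filter.eventually_of_mem this fun v hv => hv
  have h2 : ∀ᶠ v in nhds z, 0 < BB v := by
    have := (hasFDerivAt_BB z).continuousAt (Ioi_mem_nhds hB)
    exact Filter.eventually_of_mem this fun v hv => hv
  set r : ℝ := -(((n:ℝ) + 1) / 2) with hr
  set K : ℝ := 2 ^ (n - 1) * ccc n ^ n with hK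
  set F2 : EuclideanSpace ℝ (Fin (n + 1)) → EuclideanSpace ℝ (Fin (n + 1)) :=
    fun w => (K * PP w ^ r) • WW w with hF2def
  have hFN : FN =ᶠ[nhds z] F2 := by
    filter_upwards [h1, h2] with v hAv hBv
    have hPv : 0 < PP v := mul_pos hAv hBv
    have hg := (hasGradientAt_UN hAv hBv).gradient
    show ‖gradient UN v‖ ^ (n - 1) • gradient UN v = _
    rw [hg, norm_GG hPv]
    show _ • ((ccc n / PP v) • WW v) = _
    rw [smul_smul, scalar_pow hn hPv]
  have hφ : HasFDerivAt (fun w => K * PP w ^ r)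
      (K • ((r * PP z ^ (r - 1)) • dPP z)) z :=
    ((hasFDerivAt_PP z).rpow_const (Or.inl hP.ne')).const_mul K
  have hF2 : HasFDerivAt F2
      ((K * PP z ^ r) • dWW z + (K • ((r * PP z ^ (r - 1)) • dPP z)).smulRight (WW z)) z :=
    hφ.smul (hasFDerivAt_WW z)
  constructor
  · exact hF2.differentiableAt.congr_of_eventuallyEq hFN
  rw [hFN.fderiv_eq, hF2.fderiv]
  have heval : ∀ i : Fin (n + 1),
      (((K * PP z ^ r) • dWW z + (K • ((r * PP z ^ (r - 1)) • dPP z)).smulRight (WW z))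
        (EuclideanSpace.single i 1)) i
      = (K * PP z ^ r) * dWW z (EuclideanSpace.single i 1) i
        + (K * (r * PP z ^ (r - 1))) * (dPP z (EuclideanSpace.single i 1) * WW z i) := by
    intro i
    simp only [ContinuousLinearMap.add_apply, ContinuousLinearMap.smul_apply,
      ContinuousLinearMap.smulRight_apply, PiLp.add_apply, PiLp.smul_apply, smul_eq_mul]
    ring
  rw [Finset.sum_congr rfl fun i _ => heval i, Finset.sum_add_distrib,
    ← Finset.mul_sum, ← Finset.mul_sum, div_dWW, sum_dPP_WW]
  have hrw : PP z ^ r = PP z ^ (r - 1) * PP z := by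
    nth_rewrite 1 [show r = (r - 1) + 1 by ring]
    rw [Real.rpow_add_one hP.ne']
  rw [hrw]
  have hPe : PP z = (SS z + (1 - z (Fin.last n)) ^ 2) * (SS z + (1 + z (Fin.last n)) ^ 2) := rfl
  set y := z (Fin.last n)
  set s := SS z
  set q := PP z ^ (r - 1)
  have key : (q * PP z) * (-4 * y * ((n:ℝ) + 1))
      + (r * q) * (-16 * y * s * (s + 1 + y ^ 2) + 8 * y * ((s - 1 + y ^ 2) * (s + 1 - y ^ 2)))
      = 0 := by
    rw [hPe, hr]
    ring
  calc K * (q * PP z) * (-4 * y * ((n:ℝ) + 1))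
      + K * (r * q) * (-16 * y * s * (s + 1 + y ^ 2) + 8 * y * ((s - 1 + y ^ 2) * (s + 1 - y ^ 2)))
      = K * ((q * PP z) * (-4 * y * ((n:ℝ) + 1))
        + (r * q) * (-16 * y * s * (s + 1 + y ^ 2) + 8 * y * ((s - 1 + y ^ 2) * (s + 1 - y ^ 2)))) := by ring
    _ = 0 := by rw [key, mul_zero]
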